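/- Let U : ℝᵈ → ℝ be twice continuously differentiable with M-Lipschitz gradient, and let (q_t, p_t) solve Hamilton's equations q' = p, p' = −∇U(q) with initial data (q₀,p₀). Let p̄ = sup_{0≤t≤η} ‖p_t‖₂. Then the leapfrog position update q° = q₀ + η p₀ − (η²/2)∇U(q₀) satisfies ‖q° − q_η‖₂ ≤ (1/6) η³ p̄ M. -/

import Mathlib

open Real

/-- local error bound for the leapfrog position update against the
exact Hamiltonian flow, for a potential with `M`-Lipschitz gradient. -/
theorem leapfrog_position_local_error {d : ℕ}
    (U : EuclideanSpace ℝ (Fin d) → ℝ)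
    (gU : EuclideanSpace ℝ (Fin d) → EuclideanSpace ℝ (Fin d))
    (hU : ∀ x, HasGradientAt U (gU x) x)
    (M : ℝ) (hM : 0 ≤ M)
    (hlip : ∀ x y, ‖gU x - gU y‖ ≤ M * ‖x - y‖)
    (q p : ℝ → EuclideanSpace ℝ (Fin d))
    (hq : ∀ t, HasDerivAt q (p t) t)
    (hp : ∀ t, HasDerivAt p (-gU (q t)) t)
    (η : ℝ) (hη : 0 ≤ η)
    (pbar : ℝ) (hpbar : ∀ t ∈ Set.Icc (0:ℝ) η, ‖p t‖ ≤ pbar) :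
    ‖(q 0 + η • p 0 - (η^2 / 2) • gU (q 0)) - q η‖ ≤ (1/6) * η^3 * pbar * M := by
  -- Step 1 : ‖q t - q 0‖ ≤ pbar * t on [0, η]
  have step1 : ∀ t ∈ Set.Icc (0:ℝ) η, ‖q t - q 0‖ ≤ pbar * t := by
    have := norm_image_sub_le_of_norm_deriv_right_le_segment (f := q) (f' := p)
      (a := 0) (b := η) (C := pbar)
      (fun t _ => (hq t).continuousAt.continuousWithinAt)
      (fun t ht => ((hq t).hasDerivWithinAt))
      (fun t ht => hpbar t ⟨ht.1, le_of_lt ht.2⟩)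
    intro t ht
    simpa using this t ht
  -- the auxiliary error function
  set g : ℝ → EuclideanSpace ℝ (Fin d) :=
    fun t => q t - q 0 - t • p 0 + (t^2/2) • gU (q 0) with hgdef
  set g' : ℝ → EuclideanSpace ℝ (Fin d) :=
    fun t => p t - p 0 + t • gU (q 0) with hg'def
  have hgderiv : ∀ t, HasDerivAt g (g' t) t := by
    intro t
    have h1 : HasDerivAt (fun t : ℝ => t • p 0) ((1:ℝ) • p 0) t :=
      (hasDerivAt_id t).smul_const (p 0)
    have h2 : HasDerivAt (fun t : ℝ => (t^2/2) • gU (q 0))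
        ((2 * t ^ 1 / 2) • gU (q 0)) t :=
      ((hasDerivAt_pow 2 t).div_const 2).smul_const (gU (q 0))
    have := (((hq t).sub_const (q 0)).sub h1).add h2
    convert this using 1
    any_goals rfl
    have h2t : (2 * t ^ 1 / 2 : ℝ) = t := by ring
    rw [h2t]
    simp only [g', one_smul]
  have hg'deriv : ∀ t, HasDerivAt g' (gU (q 0) - gU (q t)) t := by
    intro t
    have h1 : HasDerivAt (fun t : ℝ => t • gU (q 0)) ((1:ℝ) • gU (q 0)) t :=
      (hasDerivAt_id t).smul_const (gU (q 0))
    have := ((hp t).sub_const (p 0)).add h1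
    convert this using 1
    any_goals rfl
    module
  -- Step 2 : ‖g' t‖ ≤ M * pbar * t^2 / 2 on [0, η]
  have hB2 : ∀ x : ℝ, HasDerivAt (fun t : ℝ => M * pbar * t^2 / 2) (M * pbar * x) x := by
    intro t
    have : HasDerivAt (fun t : ℝ => M * pbar * t^2 / 2)
        (M * pbar * (2 * t ^ 1) / 2) t :=
      (((hasDerivAt_pow 2 t).const_mul (M * pbar)).div_const 2)
    convert this using 1; ring
  have bound2 : ∀ t ∈ Set.Ico (0:ℝ) η, ‖gU (q 0) - gU (q t)‖ ≤ M * pbar * t := by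
    intro t ht
    have h1 : ‖gU (q 0) - gU (q t)‖ ≤ M * ‖q 0 - q t‖ := hlip _ _
    have h2 : ‖q 0 - q t‖ ≤ pbar * t := by
      rw [norm_sub_rev]; exact step1 t ⟨ht.1, le_of_lt ht.2⟩
    calc ‖gU (q 0) - gU (q t)‖ ≤ M * (pbar * t) :=
          h1.trans (mul_le_mul_of_nonneg_left h2 hM)
      _ = M * pbar * t := by ring
  have step2 : ∀ t ∈ Set.Icc (0:ℝ) η, ‖g' t‖ ≤ M * pbar * t^2 / 2 :=
    fun t ht => image_norm_le_of_norm_deriv_right_le_deriv_boundary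
      (f := g') (f' := fun t => gU (q 0) - gU (q t)) (a := 0) (b := η)
      (B := fun t => M * pbar * t^2 / 2) (B' := fun t => M * pbar * t)
      (fun t _ => (hg'deriv t).continuousAt.continuousWithinAt)
      (fun t _ => (hg'deriv t).hasDerivWithinAt)
      (by simp [g']) hB2 bound2 ht
  -- Step 3 : ‖g t‖ ≤ M * pbar * t^3 / 6 on [0, η]
  have hB3 : ∀ x : ℝ, HasDerivAt (fun t : ℝ => M * pbar * t^3 / 6) (M * pbar * x^2 / 2) x := by
    intro t
    have : HasDerivAt (fun t : ℝ => M * pbar * t^3 / 6)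
        (M * pbar * (3 * t ^ 2) / 6) t :=
      (((hasDerivAt_pow 3 t).const_mul (M * pbar)).div_const 6)
    convert this using 1; ring
  have step3 : ∀ t ∈ Set.Icc (0:ℝ) η, ‖g t‖ ≤ M * pbar * t^3 / 6 :=
    fun t ht => image_norm_le_of_norm_deriv_right_le_deriv_boundary
      (f := g) (f' := g') (a := 0) (b := η)
      (B := fun t => M * pbar * t^3 / 6) (B' := fun t => M * pbar * t^2 / 2)
      (fun t _ => (hgderiv t).continuousAt.continuousWithinAt)
      (fun t _ => (hgderiv t).hasDerivWithinAt)
      (by simp [g]) hB3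
      (fun t ht => step2 t ⟨ht.1, le_of_lt ht.2⟩) ht
  have := step3 η ⟨hη, le_refl η⟩
  have heq : (q 0 + η • p 0 - (η^2 / 2) • gU (q 0)) - q η = -(g η) := by
    simp only [g]; module
  rw [heq, norm_neg]
  calc ‖g η‖ ≤ M * pbar * η^3 / 6 := this
    _ = 1/6 * η^3 * pbar * M := by ring
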